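/- Learning-derivation structure lemma: if a clause D is in C_j(S) for a CDCL state S = (ℂ, t) with t = [y₁*=a₁,…,y_r*=a_r], then there exist clauses C₁,…,C_{k+1} ∈ ℂ and indices j ≤ i₁ < ⋯ < i_k ≤ r such that C_{k+1}|_t = 0, C_ν|_{t[≤ i_ν −1]} = y_{i_ν}^{a_{i_ν}} for every ν ∈ [k], and D = C_{k+1} ∘^{y_{i_k}} C_k ∘ ⋯ ∘^{y_{i_1}} C₁ with all the resolution operators non-null. -/

import Mathlib

abbrev Var := ℕ
abbrev Lit := Var × Bool
abbrev Clause := Finset Lit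

def Clause.vars (C : Clause) : Finset Var := C.image Prod.fst

abbrev Assignment := Var → Option Bool

def litSat (σ : Assignment) (l : Lit) : Prop := σ l.1 = some l.2
def litFalse (σ : Assignment) (l : Lit) : Prop := σ l.1 = some (!l.2)

def Clause.falsified (σ : Assignment) (C : Clause) : Prop := ∀ l ∈ C, litFalse σ l

def resolve (x : Var) (C D : Clause) : Clause :=
  C.filter (fun l => l.1 ≠ x) ∪ D.filter (fun l => l.1 ≠ x)

def resolvableOn (x : Var) (C D : Clause) : Prop :=
  (∃ a : Bool, (x, a) ∈ C ∧ (x, !a) ∈ D) ∧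
    ∀ (y : Var) (b : Bool), y ≠ x → (y, b) ∈ C → (y, !b) ∉ D
abbrev TEntry := Var × Bool × Bool

abbrev Trail := List TEntry

def Trail.assign (t : Trail) : Assignment :=
  fun x => (t.find? (fun e => e.1 == x)).map (fun e => e.2.1)

def Trail.varList (t : Trail) : List Var := t.map (fun e => e.1)

def restrictedIsUnit (σ : Assignment) (C : Clause) (l : Lit) : Prop :=
  l ∈ C ∧ σ l.1 = none ∧ ∀ m ∈ C, m ≠ l → litFalse σ m
def prefixAssign (t : Trail) (k : ℕ) : Assignment := Trail.assign (t.take k)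

def stepSet (𝒞 : Set Clause) (t : Trail) (k : ℕ) (prev : Set Clause) : Set Clause :=
  match t[k - 1]? with
  | none => prev
  | some e =>
      if e.2.2 then prev
      else
        {D ∈ prev | (e.1, !e.2.1) ∉ D} ∪
          {F | ∃ D ∈ prev, (e.1, !e.2.1) ∈ D ∧
            ∃ C ∈ 𝒞, restrictedIsUnit (prefixAssign t (k - 1)) C (e.1, e.2.1) ∧
              F = resolve e.1 C D}

def CsetDown (𝒞 : Set Clause) (t : Trail) : ℕ → Set Clause
  | 0 => {D ∈ 𝒞 | Clause.falsified (Trail.assign t) D}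
  | m + 1 => stepSet 𝒞 t (t.length - m) (CsetDown 𝒞 t m)

/-- The literal assigned at the (1-based) position `i` of the trail. -/
def trailLit (t : Trail) (i : ℕ) : Lit :=
  ((t.getD (i - 1) (0, false, false)).1, (t.getD (i - 1) (0, false, false)).2.1)

/-- `chainHolds t acc L D` says that starting from `acc` and successively resolving
with the clauses recorded in `L` (each on the variable assigned at the recorded
trail position), every resolution operator is non-null and the final result is `D`. -/
def chainHolds (t : Trail) : Clause → List (ℕ × Clause) → Clause → Prop
  | acc, [], D => D = acc
  | acc, p :: rest, D =>
      resolvableOn (trailLit t p.1).1 acc p.2 ∧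
        chainHolds t (resolve (trailLit t p.1).1 acc p.2) rest D

lemma assign_of_prefixAssign (t : Trail) (k : ℕ) (y : Var) (c : Bool)
    (h : prefixAssign t k y = some c) : Trail.assign t y = some c := by
  unfold prefixAssign Trail.assign at *
  obtain ⟨en, hen, rfl⟩ := Option.map_eq_some_iff.mp h
  have : t.find? (fun e => e.1 == y) = some en := by
    have := List.take_append_drop k t
    rw [← this, List.find?_append, hen]
    rfl
  rw [this]; rfl

lemma falsified_CsetDown (𝒞 : Set Clause) (t : Trail) :
    ∀ m, ∀ D ∈ CsetDown 𝒞 t m, Clause.falsified (Trail.assign t) D := by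
  intro m
  induction m with
  | zero => intro D hD; exact hD.2
  | succ m ih =>
    intro D hD
    unfold CsetDown stepSet at hD
    split at hD
    · exact ih D hD
    · rename_i e _
      split at hD
      · exact ih D hD
      · rename_i hdec
        rcases hD with hD | hD
        · exact ih D hD.1
        · obtain ⟨D', hD', hpiv, C, hC, hunit, rfl⟩ := hD
          intro l hl
          rcases Finset.mem_union.mp hl with hl | hl
          · obtain ⟨hlC, hlx⟩ := Finset.mem_filter.mp hl
            have hne : l ≠ (e.1, e.2.1) := by
              intro h; apply hlx; rw [h]
            have := hunit.2.2 l hlC hne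
            exact assign_of_prefixAssign _ _ _ _ this
          · exact ih D' hD' l (Finset.mem_filter.mp hl).1

lemma chainHolds_append (t : Trail) (q : ℕ × Clause) :
    ∀ (L : List (ℕ × Clause)) (acc E : Clause), chainHolds t acc L E →
      resolvableOn (trailLit t q.1).1 E q.2 →
      chainHolds t acc (L ++ [q]) (resolve (trailLit t q.1).1 E q.2) := by
  intro L
  induction L with
  | nil =>
    intro acc E h hr
    cases h
    exact ⟨hr, rfl⟩
  | cons p rest ih =>
    intro acc E h hr
    exact ⟨h.1, ih _ _ h.2 hr⟩

theorem stmt_16 (𝒞 : Set Clause) (t : Trail) (ht : (Trail.varList t).Nodup)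
    (j : ℕ) (hj1 : 1 ≤ j) (hj2 : j ≤ t.length + 1)
    (D : Clause) (hD : D ∈ CsetDown 𝒞 t (t.length + 1 - j)) :
    ∃ (L : List (ℕ × Clause)) (Ck1 : Clause),
      Ck1 ∈ 𝒞 ∧ Clause.falsified (Trail.assign t) Ck1 ∧
      (∀ p ∈ L, p.2 ∈ 𝒞) ∧
      (∀ p ∈ L, j ≤ p.1 ∧ p.1 ≤ t.length) ∧
      -- the recorded positions are i_k > i_{k−1} > ⋯ > i_1
      L.Chain' (fun p q => q.1 < p.1) ∧
      (∀ p ∈ L, restrictedIsUnit (prefixAssign t (p.1 - 1)) p.2 (trailLit t p.1)) ∧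
      chainHolds t Ck1 L D := by
  clear ht
  suffices h : ∀ m (j : ℕ), 1 ≤ j → j ≤ t.length + 1 → m = t.length + 1 - j →
      ∀ D ∈ CsetDown 𝒞 t m,
      ∃ (L : List (ℕ × Clause)) (Ck1 : Clause),
        Ck1 ∈ 𝒞 ∧ Clause.falsified (Trail.assign t) Ck1 ∧
        (∀ p ∈ L, p.2 ∈ 𝒞) ∧
        (∀ p ∈ L, j ≤ p.1 ∧ p.1 ≤ t.length) ∧
        L.Chain' (fun p q => q.1 < p.1) ∧
        (∀ p ∈ L, restrictedIsUnit (prefixAssign t (p.1 - 1)) p.2 (trailLit t p.1)) ∧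
        chainHolds t Ck1 L D by
    exact h _ j hj1 hj2 rfl D hD
  intro m
  induction m with
  | zero =>
    intro j hj1 hj2 hm D hD
    exact ⟨[], D, hD.1, hD.2, by simp, by simp, List.IsChain.nil, by simp, rfl⟩
  | succ m ih =>
    intro j hj1 hj2 hm D hD
    have hjle : j ≤ t.length := by omega
    have hmk : t.length - m = j := by omega
    have hjlt : j - 1 < t.length := by omega
    unfold CsetDown stepSet at hD
    rw [hmk] at hD
    have hgets : t[j-1]? = some t[j-1] := List.getElem?_eq_getElem hjlt
    set e := t[j-1] with hedef
    rw [hgets] at hD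
    have hD2 : D ∈ (if e.2.2 then CsetDown 𝒞 t m
      else
        {D ∈ CsetDown 𝒞 t m | (e.1, !e.2.1) ∉ D} ∪
          {F | ∃ D ∈ CsetDown 𝒞 t m, (e.1, !e.2.1) ∈ D ∧
            ∃ C ∈ 𝒞, restrictedIsUnit (prefixAssign t (j - 1)) C (e.1, e.2.1) ∧
              F = resolve e.1 C D}) := hD
    clear hD; rename' hD2 => hD
    have htl : trailLit t j = (e.1, e.2.1) := by
      unfold trailLit
      rw [List.getD_eq_getElem?_getD, List.getElem?_eq_getElem hjlt]
      rfl
    have weaken : ∀ D', D' ∈ CsetDown 𝒞 t m →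
        ∃ (L : List (ℕ × Clause)) (Ck1 : Clause),
          Ck1 ∈ 𝒞 ∧ Clause.falsified (Trail.assign t) Ck1 ∧
          (∀ p ∈ L, p.2 ∈ 𝒞) ∧
          (∀ p ∈ L, j + 1 ≤ p.1 ∧ p.1 ≤ t.length) ∧
          L.Chain' (fun p q => q.1 < p.1) ∧
          (∀ p ∈ L, restrictedIsUnit (prefixAssign t (p.1 - 1)) p.2 (trailLit t p.1)) ∧
          chainHolds t Ck1 L D' := by
      intro D' hD'
      exact ih (j + 1) (by omega) (by omega) (by omega) D' hD'
    by_cases hdec : e.2.2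
    · rw [if_pos hdec] at hD
      obtain ⟨L, Ck1, h1, h2, h3, h4, h5, h6, h7⟩ := weaken D hD
      exact ⟨L, Ck1, h1, h2, h3, fun p hp => ⟨by have := (h4 p hp).1; omega, (h4 p hp).2⟩,
        h5, h6, h7⟩
    · rw [if_neg hdec] at hD
      rcases hD with hD | hD
      · obtain ⟨L, Ck1, h1, h2, h3, h4, h5, h6, h7⟩ := weaken D hD.1
        exact ⟨L, Ck1, h1, h2, h3, fun p hp => ⟨by have := (h4 p hp).1; omega, (h4 p hp).2⟩,
          h5, h6, h7⟩
      · obtain ⟨D', hD', hpiv, C, hC, hunit, rfl⟩ := hD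
        obtain ⟨L, Ck1, h1, h2, h3, h4, h5, h6, h7⟩ := weaken D' hD'
        have hres : resolvableOn e.1 D' C := by
          constructor
          · exact ⟨!e.2.1, hpiv, by simpa using hunit.1⟩
          · intro y b hy hbD' hbC
            have hfalse := falsified_CsetDown 𝒞 t m D' hD' (y, b) hbD'
            have hne : ((y, !b) : Lit) ≠ (e.1, e.2.1) := by
              intro h; exact hy (congrArg Prod.fst h)
            have := hunit.2.2 (y, !b) hbC hne
            have h2' := assign_of_prefixAssign t (j - 1) y (!!b) this
            unfold litFalse at hfalse
            simp only [Bool.not_not] at h2'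
            rw [h2'] at hfalse
            have : b = !b := by injection hfalse
            exact Bool.self_ne_not b this
        refine ⟨L ++ [(j, C)], Ck1, h1, h2, ?_, ?_, ?_, ?_, ?_⟩
        · intro p hp
          rcases List.mem_append.mp hp with hp | hp
          · exact h3 p hp
          · simp at hp; rw [hp]; exact hC
        · intro p hp
          rcases List.mem_append.mp hp with hp | hp
          · exact ⟨by have := (h4 p hp).1; omega, (h4 p hp).2⟩
          · simp at hp; rw [hp]; exact ⟨le_refl j, hjle⟩
        · rw [List.Chain', List.isChain_append]
          refine ⟨h5, List.isChain_singleton _, ?_⟩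
          intro x hx y hy
          simp at hy
          have hxL : x ∈ L := List.mem_of_mem_getLast? hx
          cases hy
          have := (h4 x hxL).1
          simpa using by omega
        · intro p hp
          rcases List.mem_append.mp hp with hp | hp
          · exact h6 p hp
          · simp at hp; rw [hp]
            simpa [htl] using hunit
        · have := chainHolds_append t (j, C) L Ck1 D' h7 (by rw [htl]; exact hres)
          rw [htl] at this
          have hcomm : resolve e.1 C D' = resolve e.1 D' C := Finset.union_comm _ _
          rw [hcomm]
          exact this
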